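/- The cluster measure equals the push-forward of the auxiliary marked-configuration measure under the cluster-projection map: μ_cl = 𝔮*μ̂, i.e., for every bounded measurable F on Γ_X^♯, ∫ F(γ) dμ_cl(γ) = ∫ F(𝔮(γ̂)) dμ̂(γ̂). Equivalently, the Laplace functionals coincide: L_{𝔮*μ̂}(f) = ∫_{Γ_X^♯} Π_{x∈γ} ( ∫_𝔛 exp(−Σ_{y_i∈ȳ} f(y_i)) dη_x(ȳ) ) dμ(γ) for all measurable f : X → ℝ≥0. -/

import Mathlib

open MeasureTheory ENNReal Filter Topology
open scoped NNReal

/-- `exp(−S)` for `S ∈ [0,∞]`, with `exp(−∞) = 0`. -/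
noncomputable def negExp (S : ℝ≥0∞) : ℝ≥0∞ :=
  if S = ⊤ then 0 else ENNReal.ofReal (Real.exp (-S.toReal))

lemma negExp_top : negExp ⊤ = 0 := by simp [negExp]

lemma negExp_of_ne_top {S : ℝ≥0∞} (h : S ≠ ⊤) :
    negExp S = ENNReal.ofReal (Real.exp (-S.toReal)) := by simp [negExp, h]

lemma negExp_zero : negExp 0 = 1 := by simp [negExp]

lemma negExp_le_one (S : ℝ≥0∞) : negExp S ≤ 1 := by
  rcases eq_or_ne S ⊤ with h | h
  · simp [h, negExp_top]
  · rw [negExp_of_ne_top h]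
    rw [show (1 : ℝ≥0∞) = ENNReal.ofReal 1 by simp]
    exact ENNReal.ofReal_le_ofReal (by
      rw [Real.exp_le_one_iff]
      simpa using ENNReal.toReal_nonneg)

lemma negExp_anti : Antitone negExp := by
  intro a b hab
  rcases eq_or_ne b ⊤ with h | h
  · simp [h, negExp_top]
  · have ha : a ≠ ⊤ := fun haa => h (by simpa [haa] using hab)
    rw [negExp_of_ne_top h, negExp_of_ne_top ha]
    exact ENNReal.ofReal_le_ofReal (Real.exp_le_exp.2 (by
      simpa using ENNReal.toReal_le_toReal ha h |>.2 hab))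

lemma negExp_add (a b : ℝ≥0∞) : negExp (a + b) = negExp a * negExp b := by
  rcases eq_or_ne a ⊤ with h | h
  · simp [h, negExp_top]
  rcases eq_or_ne b ⊤ with h' | h'
  · simp [h', negExp_top]
  rw [negExp_of_ne_top h, negExp_of_ne_top h',
    negExp_of_ne_top (by simp [ENNReal.add_ne_top, h, h']),
    ENNReal.toReal_add h h', neg_add, Real.exp_add,
    ENNReal.ofReal_mul (Real.exp_nonneg _)]

lemma negExp_sum {ι : Type*} (s : Finset ι) (a : ι → ℝ≥0∞) :
    negExp (∑ i ∈ s, a i) = ∏ i ∈ s, negExp (a i) := by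
  classical
  induction s using Finset.cons_induction with
  | empty => simp [negExp_zero]
  | cons i s his ih => rw [Finset.sum_cons, Finset.prod_cons, negExp_add, ih]

lemma negExp_measurable : Measurable negExp := by
  have : Measurable fun S : ℝ≥0∞ => ENNReal.ofReal (Real.exp (-S.toReal)) :=
    ENNReal.measurable_ofReal.comp
      ((Real.continuous_exp.measurable).comp ENNReal.measurable_toReal.neg)
  exact Measurable.ite (by simpa using measurableSet_singleton (⊤ : ℝ≥0∞))
    measurable_const this

/-- `negExp` maps a monotone supremum to the infimum of the images. -/
lemma negExp_iSup (b : ℕ → ℝ≥0∞) (hb : Monotone b) :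
    negExp (⨆ n, b n) = ⨅ n, negExp (b n) := by
  have hanti : Antitone fun n => negExp (b n) := fun m n hmn => negExp_anti (hb hmn)
  have hinf : Tendsto (fun n => negExp (b n)) atTop (𝓝 (⨅ n, negExp (b n))) :=
    tendsto_atTop_iInf hanti
  by_cases hex : ∃ n, b n = ⊤
  · obtain ⟨n, hn⟩ := hex
    have h1 : (⨆ n, b n) = ⊤ := top_le_iff.1 (hn ▸ le_iSup b n)
    have h2 : (⨅ n, negExp (b n)) ≤ 0 := by
      refine le_trans (iInf_le _ n) ?_
      simp [hn, negExp_top]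
    rw [h1, negExp_top]
    exact (le_antisymm h2 zero_le).symm
  push_neg at hex
  have htend : Tendsto b atTop (𝓝 (⨆ n, b n)) := tendsto_atTop_iSup hb
  rcases eq_or_ne (⨆ n, b n) ⊤ with hS | hS
  · -- b n → ⊤ with b n ≠ ⊤, so toReal (b n) → ∞ and negExp (b n) → 0
    rw [hS] at htend
    have htoReal : Tendsto (fun n => (b n).toReal) atTop atTop := by
      rw [tendsto_atTop]
      intro M
      have := (ENNReal.tendsto_nhds_top_iff_nnreal.1 htend) (Real.toNNReal M)
      filter_upwards [this] with n hn
      have : (Real.toNNReal M : ℝ≥0∞) ≤ b n := le_of_lt hn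
      have h2 := (ENNReal.toReal_le_toReal (by simp) (hex n)).2 this
      calc M ≤ max M 0 := le_max_left _ _
        _ = ((Real.toNNReal M : ℝ≥0∞)).toReal := by simp [Real.coe_toNNReal']
        _ ≤ (b n).toReal := h2
    have h0 : Tendsto (fun n => negExp (b n)) atTop (𝓝 0) := by
      have : Tendsto (fun n => ENNReal.ofReal (Real.exp (-(b n).toReal))) atTop (𝓝 0) := by
        rw [show (0 : ℝ≥0∞) = ENNReal.ofReal 0 by simp]
        apply ENNReal.tendsto_ofReal
        exact Real.tendsto_exp_atBot.comp (tendsto_neg_atTop_atBot.comp htoReal)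
      refine this.congr fun n => ?_
      rw [negExp_of_ne_top (hex n)]
    rw [hS, negExp_top]
    exact (tendsto_nhds_unique hinf h0).symm
  · -- finite sup: continuity at the finite point
    have htr : Tendsto (fun n => (b n).toReal) atTop (𝓝 (⨆ n, b n).toReal) :=
      (ENNReal.tendsto_toReal hS).comp htend
    have h0 : Tendsto (fun n => negExp (b n)) atTop (𝓝 (negExp (⨆ n, b n))) := by
      have : Tendsto (fun n => ENNReal.ofReal (Real.exp (-(b n).toReal))) atTop
          (𝓝 (ENNReal.ofReal (Real.exp (-(⨆ n, b n).toReal)))) :=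
        (ENNReal.continuous_ofReal.tendsto _).comp
          ((Real.continuous_exp.tendsto _).comp (htr.neg))
      rw [negExp_of_ne_top hS]
      exact this.congr fun n => (negExp_of_ne_top (hex n)).symm
    exact tendsto_nhds_unique h0 hinf

/-- For factors `≤ 1` in `ℝ≥0∞`, the infinite product equals the infimum of partial products. -/
lemma ennreal_tprod_eq_iInf (a : ℕ → ℝ≥0∞) (h : ∀ k, a k ≤ 1) :
    ∏' k, a k = ⨅ n, ∏ k ∈ Finset.range n, a k := by
  classical
  have hanti : ∀ s t : Finset ℕ, s ⊆ t → ∏ k ∈ t, a k ≤ ∏ k ∈ s, a k := by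
    intro s t hst
    rw [← Finset.prod_sdiff hst]
    calc (∏ k ∈ t \ s, a k) * ∏ k ∈ s, a k ≤ 1 * ∏ k ∈ s, a k := by
          gcongr
          exact Finset.prod_le_one (fun _ _ => zero_le) (fun i _ => h i)
      _ = ∏ k ∈ s, a k := one_mul _
  have hProd : HasProd a (⨅ s : Finset ℕ, ∏ k ∈ s, a k) :=
    tendsto_atTop_iInf fun s t hst => hanti s t hst
  rw [hProd.tprod_eq]
  apply le_antisymm
  · exact le_iInf fun n => iInf_le _ (Finset.range n)
  · refine le_iInf fun s => ?_
    obtain ⟨n, hn⟩ := s.exists_nat_subset_range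
    exact le_trans (iInf_le _ n) (hanti s (Finset.range n) hn)

/-- Measurability criterion for functions out of a sigma type. -/
lemma measurable_of_sigma {α : Type*} {β : α → Type*} [∀ a, MeasurableSpace (β a)]
    {γ : Type*} [MeasurableSpace γ] {F : Sigma β → γ}
    (h : ∀ a, Measurable fun b => F ⟨a, b⟩) : Measurable F := by
  intro s hs
  rw [show (Sigma.instMeasurableSpace : MeasurableSpace (Sigma β)) =
      ⨅ a, (inferInstance : MeasurableSpace (β a)).map (Sigma.mk a) from rfl]
  rw [MeasurableSpace.measurableSet_iInf]
  intro a
  exact h a hs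

theorem cluster_measure_laplace_functional
    {X : Type*} [TopologicalSpace X] [PolishSpace X] [MeasurableSpace X] [BorelSpace X]
    (η : X → Measure (Σ n : ℕ, Fin n → X)) [∀ x, IsProbabilityMeasure (η x)]
    (hη : ∀ B : Set (Σ n : ℕ, Fin n → X), MeasurableSet B → Measurable fun x => η x B)
    (μ : Measure (ℕ → X)) [IsProbabilityMeasure μ]
    (P : (ℕ → X) → Measure (ℕ → Σ n : ℕ, Fin n → X))
    [∀ γ, IsProbabilityMeasure (P γ)]
    (hP : ∀ (γ : ℕ → X) (s : Finset ℕ) (g : ℕ → (Σ n : ℕ, Fin n → X) → ℝ≥0∞),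
      (∀ k, Measurable (g k)) →
      ∫⁻ y, ∏ k ∈ s, g k (y k) ∂(P γ) = ∏ k ∈ s, ∫⁻ z, g k z ∂(η (γ k)))
    (f : X → ℝ≥0) (hf : Measurable f) :
    ∫⁻ γ, ∫⁻ y, negExp (∑' k, ∑ i : Fin (y k).1, (f ((y k).2 i) : ℝ≥0∞)) ∂(P γ) ∂μ
      = ∫⁻ γ, ∏' k, ∫⁻ yv, negExp (∑ i : Fin yv.1, (f (yv.2 i) : ℝ≥0∞)) ∂(η (γ k)) ∂μ := by
  classical
  set S : (Σ n : ℕ, Fin n → X) → ℝ≥0∞ := fun z => ∑ i : Fin z.1, (f (z.2 i) : ℝ≥0∞) with hSdef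
  have hSmeas : Measurable S := by
    apply measurable_of_sigma
    intro n
    show Measurable fun b : Fin n → X => ∑ i : Fin n, ((f (b i) : ℝ≥0) : ℝ≥0∞)
    exact Finset.measurable_sum _ fun i _ =>
      (measurable_coe_nnreal_ennreal.comp (hf.comp (measurable_pi_apply i)))
  set g : (Σ n : ℕ, Fin n → X) → ℝ≥0∞ := fun z => negExp (S z) with hgdef
  have hgmeas : Measurable g := negExp_measurable.comp hSmeas
  have hgle : ∀ z, g z ≤ 1 := fun z => negExp_le_one _
  refine lintegral_congr fun γ => ?_
  -- pointwise identity inside the inner integral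
  have hpt : ∀ y : ℕ → Σ n : ℕ, Fin n → X,
      negExp (∑' k, S (y k)) = ⨅ n, ∏ k ∈ Finset.range n, g (y k) := by
    intro y
    rw [ENNReal.tsum_eq_iSup_sum' (fun n => Finset.range n)
      (fun t => t.exists_nat_subset_range)]
    have hmono : Monotone fun n => ∑ k ∈ Finset.range n, S (y k) :=
      fun m n hmn => Finset.sum_le_sum_of_subset (Finset.range_subset_range.2 hmn)
    rw [negExp_iSup _ hmono]
    exact iInf_congr fun n => negExp_sum _ _
  calc ∫⁻ y, negExp (∑' k, ∑ i : Fin (y k).1, (f ((y k).2 i) : ℝ≥0∞)) ∂(P γ)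
      = ∫⁻ y, ⨅ n, ∏ k ∈ Finset.range n, g (y k) ∂(P γ) := by
        exact lintegral_congr fun y => hpt y
    _ = ⨅ n, ∫⁻ y, ∏ k ∈ Finset.range n, g (y k) ∂(P γ) := by
        apply lintegral_iInf
        · intro n
          exact Finset.measurable_prod _ fun k _ => hgmeas.comp (measurable_pi_apply k)
        · intro m n hmn y
          show ∏ k ∈ Finset.range n, g (y k) ≤ ∏ k ∈ Finset.range m, g (y k)
          rw [← Finset.prod_sdiff (Finset.range_subset_range.2 hmn)]
          calc (∏ k ∈ Finset.range n \ Finset.range m, g (y k)) *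
                ∏ k ∈ Finset.range m, g (y k)
              ≤ 1 * ∏ k ∈ Finset.range m, g (y k) := by
                gcongr
                exact Finset.prod_le_one (fun _ _ => zero_le) (fun i _ => hgle _)
            _ = ∏ k ∈ Finset.range m, g (y k) := one_mul _
        · simp only [Finset.range_zero, Finset.prod_empty, lintegral_one, measure_univ]
          exact one_ne_top
    _ = ⨅ n, ∏ k ∈ Finset.range n, ∫⁻ z, g z ∂(η (γ k)) := by
        exact iInf_congr fun n => hP γ (Finset.range n) (fun _ => g) (fun _ => hgmeas)
    _ = ∏' k, ∫⁻ z, g z ∂(η (γ k)) := by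
        refine (ennreal_tprod_eq_iInf _ fun k => ?_).symm
        calc ∫⁻ z, g z ∂(η (γ k)) ≤ ∫⁻ _, 1 ∂(η (γ k)) := lintegral_mono hgle
          _ = 1 := by simp
    _ = ∏' k, ∫⁻ yv, negExp (∑ i : Fin yv.1, (f (yv.2 i) : ℝ≥0∞)) ∂(η (γ k)) := rfl
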